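/- Let K be a p×d matrix, η > 0, θ > 0, α > 0 with ηθ λ_max(KᵀK) ≤ 1. Then the block matrix Q = [[(1/η)I_d, 0], [0, (1/θ)I_p − (η/(1+ηα)) K Kᵀ]] is symmetric positive definite, and for all x ∈ ℝ^d, y ∈ ℝ^p: (1/η)‖x‖² + (ηα/(θ(1+ηα)))‖y‖² ≤ ‖(x,y)‖²_Q ≤ (1/η)‖x‖² + (1/θ)‖y‖². -/

import Mathlib

open Matrix

private lemma dp_self_nonneg {n : Type*} [Fintype n] (v : n → ℝ) : 0 ≤ v ⬝ᵥ v :=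
  Finset.sum_nonneg fun i _ => mul_self_nonneg _

/-- Rayleigh-type bound: the quadratic form of a real symmetric matrix is bounded by the
supremum of its spectrum times the squared norm. -/
private lemma rayleigh_le {n : ℕ} {A : Matrix (Fin n) (Fin n) ℝ} (hA : A.IsHermitian)
    (w : Fin n → ℝ) :
    w ⬝ᵥ A *ᵥ w ≤ sSup (spectrum ℝ A) * (w ⬝ᵥ w) := by
  classical
  set L := sSup (spectrum ℝ A) with hLdef
  have hbd : ∀ i, hA.eigenvalues i ≤ L := fun i =>
    le_csSup (Set.Finite.bddAbove Matrix.finite_real_spectrum) (hA.eigenvalues_mem_spectrum_real i)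
  set U : Matrix (Fin n) (Fin n) ℝ := (hA.eigenvectorUnitary : Matrix (Fin n) (Fin n) ℝ) with hUdef
  have hU : U * star U = 1 := (Matrix.mem_unitaryGroup_iff).mp (hA.eigenvectorUnitary).2
  set c : Fin n → ℝ := star U *ᵥ w with hc
  have key : ∀ v : Fin n → ℝ, w ⬝ᵥ (U *ᵥ v) = c ⬝ᵥ v := by
    intro v
    rw [dotProduct_mulVec]
    congr 1
    rw [hc, star_eq_conjTranspose, conjTranspose_eq_transpose_of_trivial, mulVec_transpose]
  have hcc : c ⬝ᵥ c = w ⬝ᵥ w := by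
    have := key c
    rw [hc] at this ⊢
    rw [mulVec_mulVec, hU, one_mulVec] at this
    exact this.symm
  have hspec : w ⬝ᵥ A *ᵥ w = c ⬝ᵥ (diagonal hA.eigenvalues *ᵥ c) := by
    conv_lhs => rw [hA.spectral_theorem, Unitary.conjStarAlgAut_apply]
    have hdiag : diagonal (RCLike.ofReal ∘ hA.eigenvalues) = diagonal hA.eigenvalues := by
      congr 1
    rw [hdiag, ← mulVec_mulVec, ← mulVec_mulVec, key, hc]
  rw [hspec]
  have h1 : c ⬝ᵥ (diagonal hA.eigenvalues *ᵥ c) = ∑ i, hA.eigenvalues i * (c i * c i) := by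
    simp [dotProduct, mulVec_diagonal]
    apply Finset.sum_congr rfl
    intro i _
    ring
  rw [h1, ← hcc]
  have h2 : L * (c ⬝ᵥ c) = ∑ i, L * (c i * c i) := by
    simp [dotProduct, Finset.mul_sum]
  rw [h2]
  apply Finset.sum_le_sum
  intro i _
  exact mul_le_mul_of_nonneg_right (hbd i) (mul_self_nonneg _)

/-- `‖Kᵀ y‖² ≤ λ_max(KᵀK) ‖y‖²`. -/
private lemma KT_bound {d p : ℕ} (K : Matrix (Fin p) (Fin d) ℝ) (y : Fin p → ℝ) :
    (K.transpose *ᵥ y) ⬝ᵥ (K.transpose *ᵥ y) ≤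
      sSup (spectrum ℝ (K.transpose * K)) * (y ⬝ᵥ y) := by
  classical
  set L := sSup (spectrum ℝ (K.transpose * K)) with hLdef
  have hKT : K.conjTranspose = K.transpose := conjTranspose_eq_transpose_of_trivial K
  have hpsd : (K.transpose * K).PosSemidef := by
    rw [← hKT]; exact posSemidef_conjTranspose_mul_self K
  have hA : (K.transpose * K).IsHermitian := hpsd.1
  have hL0 : 0 ≤ L := by
    rcases Nat.eq_zero_or_pos d with hd | hd
    · subst hd
      have : spectrum ℝ (K.transpose * K) = ∅ := by
        ext r
        simp [spectrum.mem_iff, isUnit_of_subsingleton]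
      rw [hLdef, this, Real.sSup_empty]
    · have i0 : Fin d := ⟨0, hd⟩
      exact le_trans (hpsd.eigenvalues_nonneg i0)
        (le_csSup (Set.Finite.bddAbove Matrix.finite_real_spectrum)
          (hA.eigenvalues_mem_spectrum_real i0))
  set w : Fin d → ℝ := K.transpose *ᵥ y with hw
  have hwy : w ⬝ᵥ w = y ⬝ᵥ (K *ᵥ w) := by
    rw [dotProduct_mulVec y K w, ← mulVec_transpose, hw]
  have hCS : (y ⬝ᵥ (K *ᵥ w)) ^ 2 ≤ (y ⬝ᵥ y) * ((K *ᵥ w) ⬝ᵥ (K *ᵥ w)) := by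
    have := Finset.sum_mul_sq_le_sq_mul_sq Finset.univ y (K *ᵥ w)
    simpa [dotProduct, sq] using this
  have hKw : (K *ᵥ w) ⬝ᵥ (K *ᵥ w) = w ⬝ᵥ ((K.transpose * K) *ᵥ w) := by
    rw [dotProduct_mulVec (K *ᵥ w) K w, ← mulVec_transpose, mulVec_mulVec]
    exact dotProduct_comm _ _
  have hray : w ⬝ᵥ ((K.transpose * K) *ᵥ w) ≤ L * (w ⬝ᵥ w) := rayleigh_le hA w
  have hmain : (w ⬝ᵥ w) ^ 2 ≤ (y ⬝ᵥ y) * (L * (w ⬝ᵥ w)) := by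
    calc (w ⬝ᵥ w) ^ 2 = (y ⬝ᵥ (K *ᵥ w)) ^ 2 := by rw [hwy]
      _ ≤ (y ⬝ᵥ y) * ((K *ᵥ w) ⬝ᵥ (K *ᵥ w)) := hCS
      _ = (y ⬝ᵥ y) * (w ⬝ᵥ ((K.transpose * K) *ᵥ w)) := by rw [hKw]
      _ ≤ (y ⬝ᵥ y) * (L * (w ⬝ᵥ w)) :=
          mul_le_mul_of_nonneg_left hray (dp_self_nonneg y)
  have hww : 0 ≤ w ⬝ᵥ w := dp_self_nonneg w
  have hyy : 0 ≤ y ⬝ᵥ y := dp_self_nonneg y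
  rcases eq_or_lt_of_le hww with h0 | h0
  · rw [← h0]
    exact mul_nonneg hL0 hyy
  · nlinarith [hmain, h0, mul_nonneg hL0 hyy]

theorem primal_dual_metric_posdef {d p : ℕ} (K : Matrix (Fin p) (Fin d) ℝ)
    (η θ α : ℝ) (hη : 0 < η) (hθ : 0 < θ) (hα : 0 < α)
    (hstep : η * θ * sSup (spectrum ℝ (K.transpose * K)) ≤ 1) :
    let Q : Matrix (Fin d ⊕ Fin p) (Fin d ⊕ Fin p) ℝ :=
      Matrix.fromBlocks ((1 / η) • 1) 0 0
        ((1 / θ) • 1 - (η / (1 + η * α)) • (K * K.transpose))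
    Q.PosDef ∧
      ∀ (x : Fin d → ℝ) (y : Fin p → ℝ),
        (1 / η) * (x ⬝ᵥ x) + (η * α / (θ * (1 + η * α))) * (y ⬝ᵥ y) ≤
            Sum.elim x y ⬝ᵥ Q.mulVec (Sum.elim x y) ∧
          Sum.elim x y ⬝ᵥ Q.mulVec (Sum.elim x y) ≤
            (1 / η) * (x ⬝ᵥ x) + (1 / θ) * (y ⬝ᵥ y) := by
  intro Q
  have h1ηα : 0 < 1 + η * α := by positivity
  set L := sSup (spectrum ℝ (K.transpose * K)) with hLdef
  -- quadratic form identity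
  have hquad : ∀ (x : Fin d → ℝ) (y : Fin p → ℝ),
      Sum.elim x y ⬝ᵥ Q.mulVec (Sum.elim x y) =
        (1 / η) * (x ⬝ᵥ x) + (1 / θ) * (y ⬝ᵥ y)
          - (η / (1 + η * α)) * ((K.transpose *ᵥ y) ⬝ᵥ (K.transpose *ᵥ y)) := by
    intro x y
    show Sum.elim x y ⬝ᵥ
        (Matrix.fromBlocks ((1 / η) • 1) 0 0
          ((1 / θ) • 1 - (η / (1 + η * α)) • (K * K.transpose))) *ᵥ Sum.elim x y = _
    rw [fromBlocks_mulVec, sumElim_dotProduct_sumElim, Sum.elim_comp_inl, Sum.elim_comp_inr]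
    have hy : y ⬝ᵥ ((K * K.transpose) *ᵥ y) = (K.transpose *ᵥ y) ⬝ᵥ (K.transpose *ᵥ y) := by
      rw [← mulVec_mulVec, dotProduct_mulVec y K, ← mulVec_transpose]
    simp only [zero_mulVec, add_zero, zero_add, sub_mulVec, smul_mulVec, one_mulVec,
      dotProduct_sub, dotProduct_smul, smul_eq_mul]
    rw [hy]
    ring
  have hbd := fun (y : Fin p → ℝ) => KT_bound K y
  constructor
  · -- positive definiteness
    refine posDef_iff_dotProduct_mulVec.mpr ⟨?_, ?_⟩
    · -- Hermitian
      show Q.conjTranspose = Q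
      show (Matrix.fromBlocks ((1 / η) • (1 : Matrix (Fin d) (Fin d) ℝ)) 0 0
          ((1 / θ) • 1 - (η / (1 + η * α)) • (K * K.transpose))).conjTranspose = _
      simp only [conjTranspose_eq_transpose_of_trivial, fromBlocks_transpose, transpose_zero,
        transpose_smul, transpose_one, transpose_sub, transpose_mul, transpose_transpose]
      rfl
    · intro z hz
      have hze : Sum.elim (z ∘ Sum.inl) (z ∘ Sum.inr) = z := Sum.elim_comp_inl_inr z
      set x := z ∘ Sum.inl
      set y := z ∘ Sum.inr
      have hxy : x ≠ 0 ∨ y ≠ 0 := by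
        by_contra h
        push_neg at h
        apply hz
        rw [← hze, h.1, h.2]
        ext (i | i) <;> simp
      have hstar : star z = z := by
        funext i; simp
      have hQ : z ⬝ᵥ Q.mulVec z =
          (1 / η) * (x ⬝ᵥ x) + (1 / θ) * (y ⬝ᵥ y)
            - (η / (1 + η * α)) * ((K.transpose *ᵥ y) ⬝ᵥ (K.transpose *ᵥ y)) := by
        rw [← hze] at *
        exact hquad x y
      rw [hstar, hQ]
      have hy2 := hbd y
      have hxx : 0 ≤ x ⬝ᵥ x := dp_self_nonneg x
      have hyy : 0 ≤ y ⬝ᵥ y := dp_self_nonneg y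
      have ht0 : 0 ≤ (K.transpose *ᵥ y) ⬝ᵥ (K.transpose *ᵥ y) := dp_self_nonneg _
      have hpos : 0 < x ⬝ᵥ x ∨ 0 < y ⬝ᵥ y := by
        rcases hxy with h | h
        · exact Or.inl (lt_of_le_of_ne hxx (fun he => h (dotProduct_self_eq_zero.mp he.symm)))
        · exact Or.inr (lt_of_le_of_ne hyy (fun he => h (dotProduct_self_eq_zero.mp he.symm)))
      -- key inequality: η θ * t ≤ y⬝y, with strictness handled by nlinarith
      have hkey : η * θ * ((K.transpose *ᵥ y) ⬝ᵥ (K.transpose *ᵥ y)) ≤ y ⬝ᵥ y := by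
        calc η * θ * ((K.transpose *ᵥ y) ⬝ᵥ (K.transpose *ᵥ y))
            ≤ η * θ * (L * (y ⬝ᵥ y)) := by
              apply mul_le_mul_of_nonneg_left hy2 (by positivity)
          _ = (η * θ * L) * (y ⬝ᵥ y) := by ring
          _ ≤ 1 * (y ⬝ᵥ y) := mul_le_mul_of_nonneg_right hstep hyy
          _ = y ⬝ᵥ y := one_mul _
      rcases hpos with h | h
      · have hterm : (η / (1 + η * α)) * ((K.transpose *ᵥ y) ⬝ᵥ (K.transpose *ᵥ y))
            ≤ (1 / θ) * (y ⬝ᵥ y) := by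
          rw [div_mul_eq_mul_div, div_le_iff₀ h1ηα]
          have hηα1 : 1 ≤ 1 + η * α := by nlinarith
          calc η * ((K.transpose *ᵥ y) ⬝ᵥ (K.transpose *ᵥ y))
              ≤ (1 / θ) * (y ⬝ᵥ y) := by
                rw [div_mul_eq_mul_div, le_div_iff₀ hθ]
                calc η * ((K.transpose *ᵥ y) ⬝ᵥ (K.transpose *ᵥ y)) * θ
                    = η * θ * ((K.transpose *ᵥ y) ⬝ᵥ (K.transpose *ᵥ y)) := by ring
                  _ ≤ y ⬝ᵥ y := hkey
                  _ = 1 * (y ⬝ᵥ y) := (one_mul _).symm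
            _ ≤ (1 / θ) * (y ⬝ᵥ y) * (1 + η * α) := by
                nlinarith [mul_nonneg (mul_nonneg (le_of_lt (one_div_pos.mpr hθ)) hyy)
                  (le_of_lt (mul_pos hη hα))]
        have : 0 < (1 / η) * (x ⬝ᵥ x) := by positivity
        nlinarith
      · -- y ≠ 0 : strict because of the α-term
        have hstrict : (η / (1 + η * α)) * ((K.transpose *ᵥ y) ⬝ᵥ (K.transpose *ᵥ y))
            < (1 / θ) * (y ⬝ᵥ y) := by
          rw [div_mul_eq_mul_div, div_lt_iff₀ h1ηα]
          have h2 : η * ((K.transpose *ᵥ y) ⬝ᵥ (K.transpose *ᵥ y)) ≤ (1 / θ) * (y ⬝ᵥ y) := by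
            rw [div_mul_eq_mul_div, le_div_iff₀ hθ]
            nlinarith [hkey]
          have h3 : (1 / θ) * (y ⬝ᵥ y) < (1 / θ) * (y ⬝ᵥ y) * (1 + η * α) := by
            have hpos2 : 0 < (1 / θ) * (y ⬝ᵥ y) := by positivity
            nlinarith [mul_pos hpos2 (mul_pos hη hα)]
          linarith
        have : 0 ≤ (1 / η) * (x ⬝ᵥ x) := by positivity
        linarith
  · -- the two-sided bound
    intro x y
    rw [hquad x y]
    have hy2 := hbd y
    have ht0 : 0 ≤ (K.transpose *ᵥ y) ⬝ᵥ (K.transpose *ᵥ y) := dp_self_nonneg _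
    have hyy : 0 ≤ y ⬝ᵥ y := dp_self_nonneg y
    constructor
    · -- lower bound
      have hkey : η * θ * ((K.transpose *ᵥ y) ⬝ᵥ (K.transpose *ᵥ y)) ≤ y ⬝ᵥ y := by
        calc η * θ * ((K.transpose *ᵥ y) ⬝ᵥ (K.transpose *ᵥ y))
            ≤ η * θ * (L * (y ⬝ᵥ y)) := by
              apply mul_le_mul_of_nonneg_left hy2 (by positivity)
          _ = (η * θ * L) * (y ⬝ᵥ y) := by ring
          _ ≤ 1 * (y ⬝ᵥ y) := mul_le_mul_of_nonneg_right hstep hyy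
          _ = y ⬝ᵥ y := one_mul _
      have goal2 : (η / (1 + η * α)) * ((K.transpose *ᵥ y) ⬝ᵥ (K.transpose *ᵥ y))
          ≤ (1 / θ) * (y ⬝ᵥ y) - (η * α / (θ * (1 + η * α))) * (y ⬝ᵥ y) := by
        have hθ1 : 0 < θ * (1 + η * α) := by positivity
        rw [div_mul_eq_mul_div, div_le_iff₀ h1ηα]
        have expand : ((1 / θ) * (y ⬝ᵥ y) - (η * α / (θ * (1 + η * α))) * (y ⬝ᵥ y)) * (1 + η * α)
            = (1 / θ) * (y ⬝ᵥ y) := by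
          field_simp
          ring
        rw [expand, div_mul_eq_mul_div, le_div_iff₀ hθ]
        nlinarith [hkey]
      linarith
    · -- upper bound
      have : 0 ≤ (η / (1 + η * α)) * ((K.transpose *ᵥ y) ⬝ᵥ (K.transpose *ᵥ y)) := by
        apply mul_nonneg (by positivity) ht0
      linarith
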